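/- Let $k$ be a field of characteristic $p > 3$ and $r \ge 1$, $n = 2r$. Define $\theta_r : W_r = \mathrm{Der}(B_r) \to B_n$ by $\theta_r(\sum_{i=1}^r f_i \partial_i) = \sum_{i=1}^r x_i f_i(x_{r+1},\ldots,x_{2r})$, where $f_i(x_{r+1},\ldots,x_{2r})$ means substituting $x_{r+j}$ for $x_j$ in $f_i$. Then the composition $\beta = D_H \circ \theta_r : W_r \to \mathrm{Der}(B_n)$ is an injective homomorphism of Lie algebras. -/

import Mathlib

open MvPolynomial

set_option synthInstance.maxHeartbeats 1000000
set_option maxHeartbeats 1000000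

noncomputable section

variable (k : Type) [Field k] (p n : ℕ)

/-- The ideal `⟨x₁^p, …, xₙ^p⟩` of the polynomial ring. -/
def truncIdeal : Ideal (MvPolynomial (Fin n) k) :=
  Ideal.span (Set.range fun i : Fin n => (X i : MvPolynomial (Fin n) k) ^ p)

/-- The truncated polynomial ring `Bₙ = k[x₁,…,xₙ]/⟨xᵢ^p⟩`. -/
abbrev TruncPoly := MvPolynomial (Fin n) k ⧸ truncIdeal k p n

/-- The canonical projection `k[x]→ Bₙ`, as a `k`-algebra homomorphism. -/
def Bmk : MvPolynomial (Fin n) k →ₐ[k] TruncPoly k p n :=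
  Ideal.Quotient.mkₐ k (truncIdeal k p n)

theorem Bmk_surjective : Function.Surjective (Bmk k p n) :=
  Ideal.Quotient.mkₐ_surjective k _

/-- The class of the variable `xᵢ` in `Bₙ`. -/
def mkX (i : Fin n) : TruncPoly k p n := Bmk k p n (X i)

theorem pderiv_mem [CharP k p] (i : Fin n) {f : MvPolynomial (Fin n) k}
    (hf : f ∈ truncIdeal k p n) : pderiv i f ∈ truncIdeal k p n := by
  induction hf using Submodule.span_induction with
  | mem x hx =>
      obtain ⟨j, rfl⟩ := hx
      have h0 : (pderiv i) ((X j : MvPolynomial (Fin n) k) ^ p) = 0 := by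
        rw [(pderiv i).leibniz_pow]
        have : (p : MvPolynomial (Fin n) k) = 0 := CharP.cast_eq_zero _ p
        rw [nsmul_eq_mul, this, zero_mul]
      rw [h0]; exact Ideal.zero_mem _
  | zero => simpa using Ideal.zero_mem _
  | add x y hx hy ihx ihy => simpa [map_add] using Ideal.add_mem _ ihx ihy
  | smul c x hx ih =>
      rw [smul_eq_mul, (pderiv i).leibniz]
      exact Ideal.add_mem _ (Submodule.smul_mem _ _ ih)
        (by rw [smul_eq_mul, mul_comm]; exact Ideal.mul_mem_left _ _ hx)

/-- The partial derivative `∂ᵢ`, descended to the truncated polynomial ring. -/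
def pd [CharP k p] (i : Fin n) : TruncPoly k p n → TruncPoly k p n :=
  fun f => Quotient.liftOn' f (fun g => Bmk k p n (pderiv i g)) (by
    intro a b hab
    have h : a - b ∈ truncIdeal k p n := by
      rwa [Submodule.quotientRel_def] at hab
    have h2 := pderiv_mem k p n i h
    rw [map_sub] at h2
    have : Bmk k p n (pderiv i a) - Bmk k p n (pderiv i b) = 0 := by
      rw [← map_sub]
      exact (Ideal.Quotient.eq_zero_iff_mem).mpr h2
    exact sub_eq_zero.mp this)

@[simp] theorem pd_mk [CharP k p] (i : Fin n) (g : MvPolynomial (Fin n) k) :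
    pd k p n i (Bmk k p n g) = Bmk k p n (pderiv i g) := rfl

/-- `∂ᵢ` as a `k`-derivation of `Bₙ`. -/
def pdD [CharP k p] (i : Fin n) :
    Derivation k (TruncPoly k p n) (TruncPoly k p n) where
  toFun := pd k p n i
  map_add' := by
    intro a b
    obtain ⟨x, rfl⟩ := Bmk_surjective k p n a
    obtain ⟨y, rfl⟩ := Bmk_surjective k p n b
    show Bmk k p n (pderiv i (x + y)) = Bmk k p n (pderiv i x) + Bmk k p n (pderiv i y)
    rw [map_add, map_add]
  map_smul' := by
    intro c a
    obtain ⟨x, rfl⟩ := Bmk_surjective k p n a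
    show Bmk k p n (pderiv i (c • x)) = c • Bmk k p n (pderiv i x)
    rw [(pderiv i).map_smul, map_smul]
  map_one_eq_zero' := by
    show Bmk k p n (pderiv i 1) = 0
    simp
  leibniz' := by
    intro a b
    obtain ⟨x, rfl⟩ := Bmk_surjective k p n a
    obtain ⟨y, rfl⟩ := Bmk_surjective k p n b
    show Bmk k p n (pderiv i (x * y)) =
      Bmk k p n x * Bmk k p n (pderiv i y) + Bmk k p n y * Bmk k p n (pderiv i x)
    rw [(pderiv i).leibniz]
    simp only [smul_eq_mul, map_add, map_mul]

@[simp] theorem pdD_apply [CharP k p] (i : Fin n) (f : TruncPoly k p n) :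
    pdD k p n i f = pd k p n i f := rfl

/-- The maximal ideal `𝔪 = (x₁,…,xₙ)` of `Bₙ`. -/
def mIdeal : Ideal (TruncPoly k p n) := Ideal.span (Set.range (mkX k p n))

/-- Evaluation at the origin `κ : Bₙ → k`. -/
def kappa (hp : 0 < p) : TruncPoly k p n →ₐ[k] k :=
  Ideal.Quotient.liftₐ (truncIdeal k p n) (aeval (0 : Fin n → k)) (by
    intro a ha
    have h : truncIdeal k p n ≤ RingHom.ker
        (aeval (0 : Fin n → k) : MvPolynomial (Fin n) k →ₐ[k] k).toRingHom := by
      rw [truncIdeal, Ideal.span_le]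
      rintro _ ⟨j, rfl⟩
      simp [RingHom.mem_ker, zero_pow hp.ne']
    exact h ha)

variable (r : ℕ)

/-- For `i < r`, the index of `xᵢ` among the `2r` variables. -/
def idx1 (i : Fin r) : Fin (2 * r) := ⟨i, by omega⟩

/-- For `i < r`, the index of `x_{i+r}` among the `2r` variables. -/
def idx2 (i : Fin r) : Fin (2 * r) := ⟨i + r, by omega⟩

/-- The Hamiltonian derivation `D_H(f) = ∑ᵢ (∂ᵢ(f)∂_{i+r} - ∂_{i+r}(f)∂ᵢ)`. -/
def DH [CharP k p] (f : TruncPoly k p (2 * r)) :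
    Derivation k (TruncPoly k p (2 * r)) (TruncPoly k p (2 * r)) :=
  ∑ i : Fin r,
    (pd k p (2 * r) (idx1 r i) f • pdD k p (2 * r) (idx2 r i)
      - pd k p (2 * r) (idx2 r i) f • pdD k p (2 * r) (idx1 r i))

/-- The Poisson bracket `[f,g] = D_H(f)(g)` on `B_{2r}`. -/
def pbr [CharP k p] (f g : TruncPoly k p (2 * r)) : TruncPoly k p (2 * r) :=
  DH k p r f g

/-- The image `Hₙ' = D_H(Bₙ)` of the Hamiltonian map, as a `k`-subspace of
derivations (it equals the span of the range of the linear map `D_H`). -/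
def HnP [CharP k p] :
    Submodule k (Derivation k (TruncPoly k p (2 * r)) (TruncPoly k p (2 * r))) :=
  Submodule.span k (Set.range (DH k p r))

/-- The substitution `x_j ↦ x_{r+j}`, as a map `B_r → B_{2r}`. -/
def shiftHom : TruncPoly k p r →ₐ[k] TruncPoly k p (2 * r) :=
  Ideal.Quotient.liftₐ (truncIdeal k p r)
    ((Bmk k p (2 * r)).comp (rename (idx2 r))) (by
      intro a ha
      have h : truncIdeal k p r ≤ RingHom.ker
          (((Bmk k p (2 * r)).comp (rename (idx2 r))).toRingHom) := by
        rw [truncIdeal, Ideal.span_le]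
        rintro _ ⟨j, rfl⟩
        have : ((Bmk k p (2 * r)).comp (rename (idx2 r))) ((X j : MvPolynomial (Fin r) k) ^ p)
            = Bmk k p (2 * r) ((X (idx2 r j) : MvPolynomial (Fin (2 * r)) k) ^ p) := by
          simp [map_pow]
        simp only [SetLike.mem_coe, RingHom.mem_ker, AlgHom.toRingHom_eq_coe,
          RingHom.coe_coe]
        rw [this]
        exact Ideal.Quotient.eq_zero_iff_mem.mpr (Ideal.subset_span ⟨idx2 r j, rfl⟩)
      exact h ha)

/-- `θ_r : W_r → B_{2r}`, `∑ fᵢ ∂ᵢ ↦ ∑ xᵢ fᵢ(x_{r+1},…,x_{2r})`. -/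
def theta [CharP k p]
    (D : Derivation k (TruncPoly k p r) (TruncPoly k p r)) : TruncPoly k p (2 * r) :=
  ∑ i : Fin r, mkX k p (2 * r) (idx1 r i) * shiftHom k p r (D (mkX k p r i))

/-- `β = D_H ∘ θ_r : W_r → Der(B_{2r})`. -/
def betaMap [CharP k p]
    (D : Derivation k (TruncPoly k p r) (TruncPoly k p r)) :
    Derivation k (TruncPoly k p (2 * r)) (TruncPoly k p (2 * r)) :=
  DH k p r (theta k p r D)

end


section Aux
open MvPolynomial
variable {σ : Type*} {R : Type*} [CommSemiring R]

theorem my_pderiv_comm [DecidableEq σ] (a b : σ) (f : MvPolynomial σ R) :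
    pderiv a (pderiv b f) = pderiv b (pderiv a f) := by
  induction f using MvPolynomial.induction_on with
  | C c => simp [pderiv_C]
  | add f g hf hg => simp [map_add, hf, hg]
  | mul_X q i ih =>
      simp only [pderiv_mul, pderiv_X, map_add, ih, Pi.single_apply]
      rcases eq_or_ne i a with rfl | ha <;> rcases eq_or_ne i b with rfl | hb <;>
        simp_all [pderiv_mul]

end Aux

noncomputable section Aux2
variable (k : Type) [Field k] (p n : ℕ) [CharP k p]
open MvPolynomial

theorem pd_comm (a b : Fin n) (f : TruncPoly k p n) :
    pd k p n a (pd k p n b f) = pd k p n b (pd k p n a f) := by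
  obtain ⟨q, rfl⟩ := Bmk_surjective k p n f
  simp only [pd_mk, my_pderiv_comm]

theorem pd_mul (a : Fin n) (f g : TruncPoly k p n) :
    pd k p n a (f * g) = pd k p n a f * g + f * pd k p n a g := by
  have := (pdD k p n a).leibniz f g
  simp only [pdD_apply, smul_eq_mul] at this
  rw [this]; ring

theorem pd_add (a : Fin n) (f g : TruncPoly k p n) :
    pd k p n a (f + g) = pd k p n a f + pd k p n a g :=
  (pdD k p n a).map_add f g

theorem pd_sub (a : Fin n) (f g : TruncPoly k p n) :
    pd k p n a (f - g) = pd k p n a f - pd k p n a g :=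
  (pdD k p n a).map_sub f g

theorem pd_neg (a : Fin n) (f : TruncPoly k p n) :
    pd k p n a (-f) = - pd k p n a f :=
  (pdD k p n a).map_neg f

theorem pd_sum (a : Fin n) {ι : Type*} (s : Finset ι) (f : ι → TruncPoly k p n) :
    pd k p n a (∑ i ∈ s, f i) = ∑ i ∈ s, pd k p n a (f i) :=
  map_sum (pdD k p n a).toLinearMap f s

theorem pd_smul (a : Fin n) (c : k) (f : TruncPoly k p n) :
    pd k p n a (c • f) = c • pd k p n a f :=
  (pdD k p n a).map_smul c f

theorem pd_mkX (a b : Fin n) :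
    pd k p n a (mkX k p n b) = if a = b then 1 else 0 := by
  show pd k p n a (Bmk k p n (X b)) = _
  rw [pd_mk, pderiv_X]
  rcases eq_or_ne a b with rfl | h
  · simp
  · simp [Pi.single_eq_of_ne (Ne.symm h), h]

theorem adjoin_mkX : Algebra.adjoin k (Set.range (mkX k p n)) = ⊤ := by
  have : Set.range (mkX k p n) = (Bmk k p n) '' (Set.range X) := by
    rw [← Set.range_comp]; rfl
  rw [this, ← AlgHom.map_adjoin, adjoin_range_X, Algebra.map_top,
    (AlgHom.range_eq_top _).mpr (Bmk_surjective k p n)]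

theorem derivation_ext {D E : Derivation k (TruncPoly k p n) (TruncPoly k p n)}
    (h : ∀ i, D (mkX k p n i) = E (mkX k p n i)) : D = E := by
  apply Derivation.ext
  intro f
  have : f ∈ Algebra.adjoin k (Set.range (mkX k p n)) := by
    rw [adjoin_mkX]; trivial
  exact Derivation.eqOn_adjoin (fun x hx => by obtain ⟨i, rfl⟩ := hx; exact h i) this

end Aux2
noncomputable section Aux3
variable (k : Type) [Field k] (p r : ℕ) [CharP k p]
open MvPolynomial

theorem idx2_injective : Function.Injective (idx2 r) := by
  intro i j h
  simp only [idx2, Fin.mk.injEq] at h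
  exact Fin.ext (by omega)

theorem idx1_injective : Function.Injective (idx1 r) := by
  intro i j h
  simp only [idx1, Fin.mk.injEq] at h
  exact Fin.ext h

theorem idx1_ne_idx2 (i j : Fin r) : idx1 r i ≠ idx2 r j := by
  intro h
  simp only [idx1, idx2, Fin.mk.injEq] at h
  omega

theorem shift_mk (q : MvPolynomial (Fin r) k) :
    shiftHom k p r (Bmk k p r q) = Bmk k p (2 * r) (rename (idx2 r) q) := rfl

theorem shift_mkX (i : Fin r) :
    shiftHom k p r (mkX k p r i) = mkX k p (2 * r) (idx2 r i) := by
  show shiftHom k p r (Bmk k p r (X i)) = _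
  rw [shift_mk, rename_X]; rfl

theorem pd2_shift (i : Fin r) (g : TruncPoly k p r) :
    pd k p (2 * r) (idx2 r i) (shiftHom k p r g) = shiftHom k p r (pd k p r i g) := by
  obtain ⟨q, rfl⟩ := Bmk_surjective k p r g
  rw [shift_mk, pd_mk, pd_mk, shift_mk, pderiv_rename (idx2_injective r)]

theorem pd1_shift (i : Fin r) (g : TruncPoly k p r) :
    pd k p (2 * r) (idx1 r i) (shiftHom k p r g) = 0 := by
  obtain ⟨q, rfl⟩ := Bmk_surjective k p r g
  rw [shift_mk, pd_mk]
  have : pderiv (idx1 r i) (rename (idx2 r) q) = 0 := by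
    apply pderiv_eq_zero_of_notMem_vars
    intro h
    obtain ⟨j, _, hj⟩ := mem_vars_rename _ _ h
    exact idx1_ne_idx2 r i j hj.symm
  rw [this, map_zero]

/-- Left inverse to `shiftHom`. -/
def tauHom (hp : p ≠ 0) : TruncPoly k p (2 * r) →ₐ[k] TruncPoly k p r :=
  Ideal.Quotient.liftₐ (truncIdeal k p (2 * r))
    (aeval fun j : Fin (2 * r) =>
      if h : r ≤ (j : ℕ) then mkX k p r ⟨(j : ℕ) - r, by omega⟩ else 0) (by
      intro a ha
      have h : truncIdeal k p (2 * r) ≤ RingHom.ker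
          ((aeval fun j : Fin (2 * r) =>
            if h : r ≤ (j : ℕ) then mkX k p r ⟨(j : ℕ) - r, by omega⟩ else 0 :
              MvPolynomial (Fin (2 * r)) k →ₐ[k] TruncPoly k p r)).toRingHom := by
        rw [truncIdeal, Ideal.span_le]
        rintro _ ⟨j, rfl⟩
        simp only [SetLike.mem_coe, RingHom.mem_ker, AlgHom.toRingHom_eq_coe, RingHom.coe_coe,
          map_pow, aeval_X]
        split_ifs with hj
        · show (Bmk k p r (X _)) ^ p = 0
          rw [← map_pow]
          exact Ideal.Quotient.eq_zero_iff_mem.mpr (Ideal.subset_span ⟨_, rfl⟩)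
        · exact zero_pow hp
      exact h ha)

theorem tau_shift (hp : p ≠ 0) (g : TruncPoly k p r) : tauHom k p r hp (shiftHom k p r g) = g := by
  obtain ⟨q, rfl⟩ := Bmk_surjective k p r g
  rw [shift_mk]
  show ((tauHom k p r hp).comp ((Bmk k p (2 * r)).comp (rename (idx2 r) : MvPolynomial (Fin r) k →ₐ[k] _))) q = Bmk k p r q
  revert q
  rw [← AlgHom.ext_iff]
  apply MvPolynomial.algHom_ext
  intro i
  simp only [AlgHom.comp_apply, rename_X]
  show tauHom k p r hp (Bmk k p (2 * r) (X (idx2 r i))) = Bmk k p r (X i)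
  show (aeval fun j : Fin (2 * r) =>
      if h : r ≤ (j : ℕ) then mkX k p r ⟨(j : ℕ) - r, by omega⟩ else 0) (X (idx2 r i)) = _
  rw [aeval_X]
  have : r ≤ ((idx2 r i : Fin (2*r)) : ℕ) := by simp [idx2]
  rw [dif_pos this]
  congr 1
  exact Fin.ext (by simp [idx2])

theorem shift_injective (hp : p ≠ 0) : Function.Injective (shiftHom k p r) := by
  intro a b h
  have := congrArg (tauHom k p r hp) h
  rwa [tau_shift k p r hp, tau_shift k p r hp] at this

end Aux3
noncomputable section Aux4
open MvPolynomial

theorem deriv_sum_apply {R A M : Type*} [CommSemiring R] [CommSemiring A] [Algebra R A]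
    [AddCommMonoid M] [Module R M] [Module A M] {ι : Type*} (s : Finset ι)
    (D : ι → Derivation R A M) (a : A) :
    (∑ i ∈ s, D i) a = ∑ i ∈ s, D i a := by
  induction s using Finset.cons_induction with
  | empty => simp
  | cons i s hi ih => rw [Finset.sum_cons, Derivation.add_apply, ih, Finset.sum_cons]

variable (k : Type) [Field k] (p r : ℕ) [CharP k p]

theorem DH_apply (f g : TruncPoly k p (2 * r)) :
    DH k p r f g = ∑ i : Fin r,
      (pd k p (2 * r) (idx1 r i) f * pd k p (2 * r) (idx2 r i) g
        - pd k p (2 * r) (idx2 r i) f * pd k p (2 * r) (idx1 r i) g) := by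
  rw [DH, deriv_sum_apply]
  exact Finset.sum_congr rfl fun i _ => by
    rw [Derivation.sub_apply, Derivation.smul_apply, Derivation.smul_apply,
      pdD_apply, pdD_apply, smul_eq_mul, smul_eq_mul]

theorem DH_mkX1 (f : TruncPoly k p (2 * r)) (j : Fin r) :
    DH k p r f (mkX k p (2 * r) (idx1 r j)) = - pd k p (2 * r) (idx2 r j) f := by
  rw [DH_apply]
  have h : ∀ i : Fin r,
      pd k p (2 * r) (idx1 r i) f * pd k p (2 * r) (idx2 r i) (mkX k p (2 * r) (idx1 r j))
        - pd k p (2 * r) (idx2 r i) f * pd k p (2 * r) (idx1 r i) (mkX k p (2 * r) (idx1 r j))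
      = if i = j then - pd k p (2 * r) (idx2 r i) f else 0 := by
    intro i
    rw [pd_mkX, pd_mkX, if_neg (fun h => idx1_ne_idx2 r j i h.symm)]
    rcases eq_or_ne i j with rfl | hij
    · simp
    · rw [if_neg (fun h => hij (idx1_injective r h)), if_neg hij]; ring
  rw [Finset.sum_congr rfl fun i _ => h i, Finset.sum_ite_eq' Finset.univ j, if_pos (Finset.mem_univ j)]

theorem DH_mkX2 (f : TruncPoly k p (2 * r)) (j : Fin r) :
    DH k p r f (mkX k p (2 * r) (idx2 r j)) = pd k p (2 * r) (idx1 r j) f := by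
  rw [DH_apply]
  have h : ∀ i : Fin r,
      pd k p (2 * r) (idx1 r i) f * pd k p (2 * r) (idx2 r i) (mkX k p (2 * r) (idx2 r j))
        - pd k p (2 * r) (idx2 r i) f * pd k p (2 * r) (idx1 r i) (mkX k p (2 * r) (idx2 r j))
      = if i = j then pd k p (2 * r) (idx1 r i) f else 0 := by
    intro i
    rw [pd_mkX, pd_mkX, if_neg (idx1_ne_idx2 r i j)]
    rcases eq_or_ne i j with rfl | hij
    · simp
    · rw [if_neg (fun h => hij (idx2_injective r h)), if_neg hij]; ring
  rw [Finset.sum_congr rfl fun i _ => h i, Finset.sum_ite_eq' Finset.univ j, if_pos (Finset.mem_univ j)]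

theorem poisson (f g : TruncPoly k p (2 * r)) :
    ⁅DH k p r f, DH k p r g⁆ = DH k p r (DH k p r f g) := by
  apply _root_.derivation_ext
  intro a
  rcases lt_or_ge (a : ℕ) r with ha | ha
  · -- a = idx1 j
    obtain ⟨j, rfl⟩ : ∃ j : Fin r, a = idx1 r j := ⟨⟨a, ha⟩, Fin.ext rfl⟩
    rw [Derivation.commutator_apply, DH_mkX1, DH_mkX1, DH_mkX1, map_neg, map_neg,
      DH_apply, DH_apply, DH_apply k p r f g, pd_sum, ← Finset.sum_neg_distrib,
      ← Finset.sum_neg_distrib, ← Finset.sum_neg_distrib, ← Finset.sum_sub_distrib]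
    refine Finset.sum_congr rfl fun i _ => ?_
    rw [pd_sub, pd_mul, pd_mul]
    rw [pd_comm k p (2 * r) (idx2 r j) (idx1 r i) f,
      pd_comm k p (2 * r) (idx2 r j) (idx2 r i) f,
      pd_comm k p (2 * r) (idx2 r j) (idx1 r i) g,
      pd_comm k p (2 * r) (idx2 r j) (idx2 r i) g]
    ring
  · -- a = idx2 j
    obtain ⟨j, rfl⟩ : ∃ j : Fin r, a = idx2 r j :=
      ⟨⟨(a : ℕ) - r, by omega⟩, Fin.ext (by simp [idx2]; omega)⟩
    rw [Derivation.commutator_apply, DH_mkX2, DH_mkX2, DH_mkX2,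
      DH_apply, DH_apply, DH_apply k p r f g, pd_sum, ← Finset.sum_sub_distrib]
    refine Finset.sum_congr rfl fun i _ => ?_
    rw [pd_sub, pd_mul, pd_mul]
    rw [pd_comm k p (2 * r) (idx1 r j) (idx1 r i) f,
      pd_comm k p (2 * r) (idx1 r j) (idx2 r i) f,
      pd_comm k p (2 * r) (idx1 r j) (idx1 r i) g,
      pd_comm k p (2 * r) (idx1 r j) (idx2 r i) g]
    ring

end Aux4
noncomputable section Aux5
open MvPolynomial
theorem deriv_map_sum {R A M : Type*} [CommSemiring R] [CommSemiring A] [Algebra R A]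
    [AddCommMonoid M] [Module R M] [Module A M] {ι : Type*} (D : Derivation R A M)
    (s : Finset ι) (f : ι → A) :
    D (∑ i ∈ s, f i) = ∑ i ∈ s, D (f i) :=
  map_sum D.toLinearMap f s

variable (k : Type) [Field k] (p r : ℕ) [CharP k p]

/-- A derivation equals the sum of its values on generators times partials. -/
theorem deriv_eq_sum (n : ℕ) (D : Derivation k (TruncPoly k p n) (TruncPoly k p n))
    (g : TruncPoly k p n) :
    D g = ∑ i : Fin n, D (mkX k p n i) * pd k p n i g := by
  have hE : D = ∑ i : Fin n, D (mkX k p n i) • pdD k p n i := by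
    apply _root_.derivation_ext
    intro j
    rw [deriv_sum_apply]
    have h : ∀ i : Fin n, (D (mkX k p n i) • pdD k p n i) (mkX k p n j)
        = if i = j then D (mkX k p n j) else 0 := by
      intro i
      rw [Derivation.smul_apply, pdD_apply, pd_mkX, smul_eq_mul]
      rcases eq_or_ne i j with rfl | hij
      · simp
      · rw [if_neg hij, if_neg hij, mul_zero]
    rw [Finset.sum_congr rfl fun i _ => h i, Finset.sum_ite_eq' Finset.univ j,
      if_pos (Finset.mem_univ j)]
  conv_lhs => rw [hE]
  rw [deriv_sum_apply]
  exact Finset.sum_congr rfl fun i _ => by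
    rw [Derivation.smul_apply, pdD_apply, smul_eq_mul]

theorem pd1_theta (D : Derivation k (TruncPoly k p r) (TruncPoly k p r)) (j : Fin r) :
    pd k p (2 * r) (idx1 r j) (theta k p r D) = shiftHom k p r (D (mkX k p r j)) := by
  rw [theta, pd_sum]
  have h : ∀ i : Fin r,
      pd k p (2 * r) (idx1 r j) (mkX k p (2 * r) (idx1 r i) * shiftHom k p r (D (mkX k p r i)))
      = if i = j then shiftHom k p r (D (mkX k p r j)) else 0 := by
    intro i
    rw [pd_mul, pd1_shift, mul_zero, add_zero, pd_mkX]
    rcases eq_or_ne i j with rfl | hij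
    · simp
    · rw [if_neg (fun h => hij (idx1_injective r h).symm), if_neg hij, zero_mul]
  rw [Finset.sum_congr rfl fun i _ => h i, Finset.sum_ite_eq' Finset.univ j,
    if_pos (Finset.mem_univ j)]

theorem pd2_theta (D : Derivation k (TruncPoly k p r) (TruncPoly k p r)) (j : Fin r) :
    pd k p (2 * r) (idx2 r j) (theta k p r D)
      = ∑ i : Fin r, mkX k p (2 * r) (idx1 r i) * shiftHom k p r (pd k p r j (D (mkX k p r i))) := by
  rw [theta, pd_sum]
  refine Finset.sum_congr rfl fun i _ => ?_
  rw [pd_mul, pd2_shift, pd_mkX, if_neg (fun h => idx1_ne_idx2 r i j h.symm), zero_mul, zero_add]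

theorem beta_shift (D : Derivation k (TruncPoly k p r) (TruncPoly k p r))
    (g : TruncPoly k p r) :
    betaMap k p r D (shiftHom k p r g) = shiftHom k p r (D g) := by
  rw [betaMap, DH_apply]
  have h : ∀ i : Fin r,
      pd k p (2 * r) (idx1 r i) (theta k p r D) * pd k p (2 * r) (idx2 r i) (shiftHom k p r g)
        - pd k p (2 * r) (idx2 r i) (theta k p r D) * pd k p (2 * r) (idx1 r i) (shiftHom k p r g)
      = shiftHom k p r (D (mkX k p r i) * pd k p r i g) := by
    intro i
    rw [pd1_shift, mul_zero, sub_zero, pd2_shift, pd1_theta, ← map_mul]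
  rw [Finset.sum_congr rfl fun i _ => h i, ← map_sum, ← deriv_eq_sum]

theorem beta_X2 (D : Derivation k (TruncPoly k p r) (TruncPoly k p r)) (j : Fin r) :
    betaMap k p r D (mkX k p (2 * r) (idx2 r j)) = shiftHom k p r (D (mkX k p r j)) := by
  rw [betaMap, DH_mkX2, pd1_theta]

theorem theta_bracket (D E : Derivation k (TruncPoly k p r) (TruncPoly k p r)) :
    betaMap k p r D (theta k p r E) = theta k p r ⁅D, E⁆ := by
  have hsum : betaMap k p r D (theta k p r E) = ∑ j : Fin r,
      (mkX k p (2 * r) (idx1 r j) * betaMap k p r D (shiftHom k p r (E (mkX k p r j)))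
        + shiftHom k p r (E (mkX k p r j)) * betaMap k p r D (mkX k p (2 * r) (idx1 r j))) := by
    rw [theta, deriv_map_sum]
    refine Finset.sum_congr rfl fun j _ => ?_
    rw [(betaMap k p r D).leibniz, smul_eq_mul, smul_eq_mul]
  rw [hsum]
  have hX1 : ∀ j : Fin r, betaMap k p r D (mkX k p (2 * r) (idx1 r j))
      = - ∑ i : Fin r, mkX k p (2 * r) (idx1 r i)
          * shiftHom k p r (pd k p r j (D (mkX k p r i))) := by
    intro j
    rw [betaMap, DH_mkX1, pd2_theta]
  have step : ∀ j : Fin r,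
      mkX k p (2 * r) (idx1 r j) * betaMap k p r D (shiftHom k p r (E (mkX k p r j)))
        + shiftHom k p r (E (mkX k p r j)) * betaMap k p r D (mkX k p (2 * r) (idx1 r j))
      = mkX k p (2 * r) (idx1 r j) * shiftHom k p r (D (E (mkX k p r j)))
        - ∑ i : Fin r, mkX k p (2 * r) (idx1 r i)
            * shiftHom k p r (E (mkX k p r j) * pd k p r j (D (mkX k p r i))) := by
    intro j
    have hm : ∑ i : Fin r, mkX k p (2 * r) (idx1 r i)
        * shiftHom k p r (E (mkX k p r j) * pd k p r j (D (mkX k p r i)))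
      = shiftHom k p r (E (mkX k p r j)) * ∑ i : Fin r, mkX k p (2 * r) (idx1 r i)
          * shiftHom k p r (pd k p r j (D (mkX k p r i))) := by
      rw [Finset.mul_sum]
      exact Finset.sum_congr rfl fun i _ => by rw [map_mul]; ring
    rw [beta_shift, hX1, hm]; ring
  rw [Finset.sum_congr rfl fun j _ => step j, Finset.sum_sub_distrib, Finset.sum_comm]
  rw [theta]
  have final : ∀ i : Fin r,
      mkX k p (2 * r) (idx1 r i) * shiftHom k p r (D (E (mkX k p r i)))
        - ∑ j : Fin r, mkX k p (2 * r) (idx1 r i)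
            * shiftHom k p r (E (mkX k p r j) * pd k p r j (D (mkX k p r i)))
      = mkX k p (2 * r) (idx1 r i) * shiftHom k p r (⁅D, E⁆ (mkX k p r i)) := by
    intro i
    rw [← Finset.mul_sum, ← map_sum, ← deriv_eq_sum, Derivation.commutator_apply,
      map_sub, mul_sub]
  rw [← Finset.sum_sub_distrib]
  exact Finset.sum_congr rfl fun i _ => final i

theorem DH_add (f g : TruncPoly k p (2 * r)) :
    DH k p r (f + g) = DH k p r f + DH k p r g := by
  apply Derivation.ext; intro h
  rw [Derivation.add_apply, DH_apply, DH_apply, DH_apply, ← Finset.sum_add_distrib]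
  refine Finset.sum_congr rfl fun i _ => ?_
  rw [pd_add, pd_add]; ring

theorem DH_smul (c : k) (f : TruncPoly k p (2 * r)) :
    DH k p r (c • f) = c • DH k p r f := by
  apply Derivation.ext; intro h
  rw [Derivation.smul_apply, DH_apply, DH_apply, Finset.smul_sum]
  refine Finset.sum_congr rfl fun i _ => ?_
  rw [pd_smul, pd_smul, smul_mul_assoc, smul_mul_assoc, smul_sub]

theorem theta_add (D E : Derivation k (TruncPoly k p r) (TruncPoly k p r)) :
    theta k p r (D + E) = theta k p r D + theta k p r E := by
  rw [theta, theta, theta, ← Finset.sum_add_distrib]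
  refine Finset.sum_congr rfl fun i _ => ?_
  rw [Derivation.add_apply, map_add, mul_add]

theorem theta_smul (c : k) (D : Derivation k (TruncPoly k p r) (TruncPoly k p r)) :
    theta k p r (c • D) = c • theta k p r D := by
  rw [theta, theta, Finset.smul_sum]
  refine Finset.sum_congr rfl fun i _ => ?_
  rw [Derivation.smul_apply, map_smul, mul_smul_comm]

end Aux5

theorem stmt13' (k : Type) [Field k] (p r : ℕ) [CharP k p] (hp : 3 < p) (hr : 1 ≤ r) :
    Function.Injective (betaMap k p r) ∧
    (∀ D E : Derivation k (TruncPoly k p r) (TruncPoly k p r),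
      betaMap k p r (D + E) = betaMap k p r D + betaMap k p r E) ∧
    (∀ (c : k) (D : Derivation k (TruncPoly k p r) (TruncPoly k p r)),
      betaMap k p r (c • D) = c • betaMap k p r D) ∧
    (∀ D E : Derivation k (TruncPoly k p r) (TruncPoly k p r),
      betaMap k p r ⁅D, E⁆ = ⁅betaMap k p r D, betaMap k p r E⁆) := by
  have hp0 : p ≠ 0 := by omega
  refine ⟨?_, ?_, ?_, ?_⟩
  · intro D E h
    apply _root_.derivation_ext
    intro j
    have := congrArg (fun F : Derivation k (TruncPoly k p (2 * r)) (TruncPoly k p (2 * r)) =>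
      F (mkX k p (2 * r) (idx2 r j))) h
    simp only [beta_X2] at this
    exact shift_injective k p r hp0 this
  · intro D E
    rw [betaMap, theta_add, DH_add]; rfl
  · intro c D
    rw [betaMap, theta_smul, DH_smul]; rfl
  · intro D E
    rw [betaMap, ← theta_bracket]
    exact (poisson k p r (theta k p r D) (theta k p r E)).symm

/-- STATEMENT 13: `β = D_H ∘ θ_r : W_r → Der(B_{2r})` is an injective homomorphism
of Lie algebras. -/
theorem stmt13 (k : Type) [Field k] (p r : ℕ) [CharP k p] (hp : 3 < p) (hr : 1 ≤ r) :
    Function.Injective (betaMap k p r) ∧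
    (∀ D E : Derivation k (TruncPoly k p r) (TruncPoly k p r),
      betaMap k p r (D + E) = betaMap k p r D + betaMap k p r E) ∧
    (∀ (c : k) (D : Derivation k (TruncPoly k p r) (TruncPoly k p r)),
      betaMap k p r (c • D) = c • betaMap k p r D) ∧
    (∀ D E : Derivation k (TruncPoly k p r) (TruncPoly k p r),
      betaMap k p r ⁅D, E⁆ = ⁅betaMap k p r D, betaMap k p r E⁆) := by
  exact stmt13' k p r hp hr
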